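/- Let W be a symmetric doubly stochastic matrix with σ_max(W - J) < 1, where J = 𝟙𝟙ᵀ/n. If (v^k) converges to v⋆ and (w^k) satisfies w^{k+1} = W w^k + (v^{k+1} - v^k), w^0 = v^0, then (w^k) converges to J v⋆. -/

import Mathlib

open Matrix Filter

/-- A geometric recursion with vanishing input tends to zero. -/
lemma geom_rec_tendsto_zero {E : Type*} [NormedAddCommGroup E] (z : ℕ → E) (b : ℕ → ℝ)
    (r : ℝ) (hr0 : 0 ≤ r) (hr1 : r < 1)
    (hrec : ∀ k, ‖z (k + 1)‖ ≤ r * ‖z k‖ + b k)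
    (hb0 : ∀ k, 0 ≤ b k)
    (hb : Tendsto b atTop (nhds 0)) :
    Tendsto z atTop (nhds 0) := by
  rw [NormedAddCommGroup.tendsto_nhds_zero]
  intro ε hε
  have h1r : 0 < 1 - r := by linarith
  set c := ε * (1 - r) / 2 with hc
  have hcpos : 0 < c := by positivity
  obtain ⟨N, hN⟩ := (Metric.tendsto_atTop.mp hb) c hcpos
  have hbN : ∀ k, N ≤ k → b k ≤ c := by
    intro k hk
    have := hN k hk
    rw [Real.dist_eq, sub_zero, abs_of_nonneg (hb0 k)] at this
    linarith
  have key : ∀ m, ‖z (N + m)‖ ≤ r ^ m * ‖z N‖ + c / (1 - r) := by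
    intro m
    induction m with
    | zero => simp; positivity
    | succ m ih =>
      have hstep : ‖z ((N + m) + 1)‖ ≤ r * ‖z (N + m)‖ + b (N + m) := hrec (N + m)
      have hb' : b (N + m) ≤ c := hbN _ (Nat.le_add_right _ _)
      have h3 : r * ‖z (N + m)‖ ≤ r * (r ^ m * ‖z N‖ + c / (1 - r)) :=
        mul_le_mul_of_nonneg_left ih hr0
      have heq : r * (c / (1 - r)) + c = c / (1 - r) := by
        field_simp
        ring
      have : N + (m + 1) = (N + m) + 1 := by omega
      rw [this]
      calc ‖z ((N + m) + 1)‖ ≤ r * ‖z (N + m)‖ + b (N + m) := hstep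
        _ ≤ r * (r ^ m * ‖z N‖ + c / (1 - r)) + c := by linarith
        _ = r ^ (m + 1) * ‖z N‖ + (r * (c / (1 - r)) + c) := by ring
        _ = r ^ (m + 1) * ‖z N‖ + c / (1 - r) := by rw [heq]
  have hceq : c / (1 - r) = ε / 2 := by
    rw [hc]; field_simp
  have hgeom : Tendsto (fun m => r ^ m * ‖z N‖) atTop (nhds 0) := by
    simpa using (tendsto_pow_atTop_nhds_zero_of_lt_one hr0 hr1).mul_const ‖z N‖
  obtain ⟨M, hM⟩ := (Metric.tendsto_atTop.mp hgeom) (ε / 2) (by positivity)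
  filter_upwards [eventually_ge_atTop (N + M)] with k hk
  obtain ⟨m, rfl⟩ : ∃ m, k = N + m := ⟨k - N, by omega⟩
  have h2 : r ^ m * ‖z N‖ < ε / 2 := by
    have := hM m (by omega)
    rwa [Real.dist_eq, sub_zero, abs_of_nonneg (by positivity)] at this
  have h1 := key m
  rw [hceq] at h1
  linarith

/-- Consensus tracking `(eq. gcon-1)`: if `σ_max(W - J) < 1`, `v^k → v⋆` and
`w^{k+1} = W w^k + (v^{k+1} - v^k)`, `w^0 = v^0`, then `w^k → J v⋆`. -/
theorem stmt1 {n : ℕ} (hn : 0 < n) (W : Matrix (Fin n) (Fin n) ℝ)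
    (hWsymm : Wᵀ = W)
    (hWrow : W.mulVec (fun _ => (1 : ℝ)) = fun _ => (1 : ℝ))
    (J : Matrix (Fin n) (Fin n) ℝ)
    (hJ : J = (n : ℝ)⁻¹ • Matrix.of (fun _ _ => (1 : ℝ)))
    (hσ : ‖Matrix.toEuclideanCLM (𝕜 := ℝ) (W - J)‖ < 1)
    (v w : ℕ → EuclideanSpace ℝ (Fin n)) (vstar : EuclideanSpace ℝ (Fin n))
    (hv : Tendsto v atTop (nhds vstar))
    (hw0 : w 0 = v 0)
    (hrec : ∀ k, w (k + 1) = Matrix.toEuclideanCLM (𝕜 := ℝ) W (w k) + (v (k + 1) - v k)) :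
    Tendsto w atTop (nhds (Matrix.toEuclideanCLM (𝕜 := ℝ) J vstar)) := by
  have hn' : (n : ℝ) ≠ 0 := Nat.cast_ne_zero.mpr hn.ne'
  -- row sums of W are 1
  have hrowsum : ∀ i, ∑ k, W i k = 1 := by
    intro i
    have := congrFun hWrow i
    simpa [Matrix.mulVec, dotProduct] using this
  -- column sums of W are 1
  have hcolsum : ∀ j, ∑ k, W k j = 1 := by
    intro j
    have : ∀ k, W k j = W j k := by
      intro k
      conv_lhs => rw [← hWsymm]
      rfl
    simp_rw [this]
    exact hrowsum j
  -- matrix identities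
  have hJW : J * W = J := by
    ext i j
    simp only [hJ, Matrix.mul_apply, Matrix.smul_apply, Matrix.of_apply, smul_eq_mul, mul_one]
    rw [← Finset.mul_sum, hcolsum]
    ring
  have hWJ : W * J = J := by
    ext i j
    simp only [hJ, Matrix.mul_apply, Matrix.smul_apply, Matrix.of_apply, smul_eq_mul, mul_one]
    rw [← Finset.sum_mul, hrowsum]
    ring
  have hJJ : J * J = J := by
    ext i j
    simp only [hJ, Matrix.mul_apply, Matrix.smul_apply, Matrix.of_apply, smul_eq_mul, mul_one]
    rw [Finset.sum_const, Finset.card_univ, Fintype.card_fin]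
    field_simp
    rw [nsmul_eq_mul]
    field_simp
  set f := Matrix.toEuclideanCLM (𝕜 := ℝ) (n := Fin n) with hf
  set T := f W with hT
  set P := f J with hP
  set A := f (W - J) with hA
  have hAsub : A = T - P := by rw [hA, map_sub]
  have hPT : ∀ x, P (T x) = P x := by
    intro x
    have h1 : f (J * W) = f J * f W := map_mul f J W
    rw [hJW] at h1
    have := congrArg (fun g => g x) h1
    simpa [ContinuousLinearMap.mul_apply] using this.symm
  have hTP : ∀ x, T (P x) = P x := by
    intro x
    have h1 : f (W * J) = f W * f J := map_mul f W J
    rw [hWJ] at h1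
    have := congrArg (fun g => g x) h1
    simpa [ContinuousLinearMap.mul_apply] using this.symm
  have hPP : ∀ x, P (P x) = P x := by
    intro x
    have h1 : f (J * J) = f J * f J := map_mul f J J
    rw [hJJ] at h1
    have := congrArg (fun g => g x) h1
    simpa [ContinuousLinearMap.mul_apply] using this.symm
  -- P (w k) = P (v k)
  have hPw : ∀ k, P (w k) = P (v k) := by
    intro k
    induction k with
    | zero => rw [hw0]
    | succ k ih =>
      rw [hrec k, map_add, map_sub, hPT, ih]
      abel
  set z : ℕ → EuclideanSpace ℝ (Fin n) := fun k => w k - P (v k) with hz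
  set d : ℕ → EuclideanSpace ℝ (Fin n) := fun k => v (k + 1) - v k with hd
  have hzrec : ∀ k, z (k + 1) = A (z k) + (d k - P (d k)) := by
    intro k
    have hAz : A (z k) = T (w k) - P (v k) := by
      rw [hAsub]
      simp only [ContinuousLinearMap.sub_apply, hz]
      rw [map_sub, map_sub, hTP, hPP, hPw k]
      abel
    rw [hAz]
    simp only [hz, hd, hrec k, map_sub]
    abel
  have hnormrec : ∀ k, ‖z (k + 1)‖ ≤ ‖A‖ * ‖z k‖ + ‖d k - P (d k)‖ := by
    intro k
    rw [hzrec k]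
    calc ‖A (z k) + (d k - P (d k))‖ ≤ ‖A (z k)‖ + ‖d k - P (d k)‖ := norm_add_le _ _
      _ ≤ ‖A‖ * ‖z k‖ + ‖d k - P (d k)‖ := by
          gcongr
          exact A.le_opNorm _
  have hdtend : Tendsto d atTop (nhds 0) := by
    have h1 : Tendsto (fun k => v (k + 1)) atTop (nhds vstar) :=
      hv.comp (tendsto_add_atTop_nat 1)
    simpa using h1.sub hv
  have hbtend : Tendsto (fun k => ‖d k - P (d k)‖) atTop (nhds 0) := by
    have h1 : Tendsto (fun k => d k - P (d k)) atTop (nhds (0 - P 0)) :=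
      hdtend.sub ((P.continuous.tendsto 0).comp hdtend)
    rw [map_zero, sub_zero] at h1
    simpa using h1.norm
  have hz0 : Tendsto z atTop (nhds 0) :=
    geom_rec_tendsto_zero z (fun k => ‖d k - P (d k)‖) ‖A‖ (norm_nonneg A) hσ
      hnormrec (fun k => norm_nonneg _) hbtend
  have hfinal : Tendsto (fun k => z k + P (v k)) atTop (nhds (0 + P vstar)) :=
    hz0.add ((P.continuous.tendsto vstar).comp hv)
  rw [zero_add] at hfinal
  have : (fun k => z k + P (v k)) = w := by
    funext k
    simp [hz]
  rwa [this] at hfinal
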